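/- Let f : [0,1] → ℝ be continuous and positive such that the function t ↦ (1−t)/f(t) is nonincreasing on [0,1], and let F(x) = ∫₀ˣ (1−t)/f(t) dt. Let X be a finite index set, let y ∈ [0,1], and for each u ∈ X let y_u ∈ [0,1] with y_u ≤ y. If Σ_{u∈X} (y − y_u) = f(y), then 1 − y ≤ Σ_{u∈X} (F(y) − F(y_u)). -/

import Mathlib

/-- Charging lemma (Lemma 2): if `f` is continuous and positive on `[0,1]`,
`t ↦ (1-t)/f t` is nonincreasing on `[0,1]`, `F x = ∫₀ˣ (1-t)/f t dt`,
and `Σ_{u ∈ X} (y - y_u) = f y` with all `y_u ≤ y` in `[0,1]`, then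
`1 - y ≤ Σ_{u ∈ X} (F y - F y_u)`. -/
theorem charging_lemma {ι : Type*} (f : ℝ → ℝ)
    (hfc : ContinuousOn f (Set.Icc 0 1))
    (hfpos : ∀ t ∈ Set.Icc (0:ℝ) 1, 0 < f t)
    (hmono : ∀ s ∈ Set.Icc (0:ℝ) 1, ∀ t ∈ Set.Icc (0:ℝ) 1,
      s ≤ t → (1 - t) / f t ≤ (1 - s) / f s)
    (F : ℝ → ℝ) (hF : ∀ x, F x = ∫ t in (0:ℝ)..x, (1 - t) / f t)
    (X : Finset ι) (y : ℝ) (hy : y ∈ Set.Icc (0:ℝ) 1)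
    (yu : ι → ℝ) (hyu : ∀ u ∈ X, yu u ∈ Set.Icc (0:ℝ) 1)
    (hle : ∀ u ∈ X, yu u ≤ y)
    (hsum : ∑ u ∈ X, (y - yu u) = f y) :
    1 - y ≤ ∑ u ∈ X, (F y - F (yu u)) := by
  set g : ℝ → ℝ := fun t => (1 - t) / f t with hg
  have hgc : ContinuousOn g (Set.Icc 0 1) := by
    apply ContinuousOn.div
    · exact (continuous_const.sub continuous_id).continuousOn
    · exact hfc
    · exact fun t ht => (hfpos t ht).ne'
  have hint : ∀ a ∈ Set.Icc (0:ℝ) 1, ∀ b ∈ Set.Icc (0:ℝ) 1,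
      IntervalIntegrable g MeasureTheory.volume a b := by
    intro a ha b hb
    exact (hgc.mono (Set.uIcc_subset_Icc ha hb)).intervalIntegrable
  have key : ∀ u ∈ X, (y - yu u) * g y ≤ F y - F (yu u) := by
    intro u hu
    have ha := hyu u hu
    have hab := hle u hu
    have hdiff : F y - F (yu u) = ∫ t in (yu u)..y, g t := by
      rw [hF, hF]
      rw [← intervalIntegral.integral_interval_sub_left
        (hint 0 (Set.left_mem_Icc.mpr one_pos.le) y hy)
        (hint 0 (Set.left_mem_Icc.mpr one_pos.le) (yu u) ha)]
    rw [hdiff]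
    calc (y - yu u) * g y = ∫ _ in (yu u)..y, g y := by
          rw [intervalIntegral.integral_const, smul_eq_mul]
      _ ≤ ∫ t in (yu u)..y, g t := by
          apply intervalIntegral.integral_mono_on hab
            intervalIntegrable_const (hint _ ha _ hy)
          intro t ht
          have ht' : t ∈ Set.Icc (0:ℝ) 1 := ⟨le_trans ha.1 ht.1, le_trans ht.2 hy.2⟩
          exact hmono t ht' y hy ht.2
  calc 1 - y = f y * g y := by
        show 1 - y = f y * ((1 - y) / f y)
        field_simp [hg, (hfpos y hy).ne']
    _ = ∑ u ∈ X, (y - yu u) * g y := by rw [← hsum, Finset.sum_mul]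
    _ ≤ ∑ u ∈ X, (F y - F (yu u)) := Finset.sum_le_sum key
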